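/- The classical Laguerre functions ℓ_n^α(t) = e^{-t} L_n^α(2t) satisfy the lowering relation t·ℓ''_n(t) + (2t+ν)·ℓ'_n(t) + (t+ν)·ℓ_n(t) = -2(n+ν-1)·ℓ_{n-1}^α(t) for n ≥ 1, where ν = α+1. -/

import Mathlib

open Finset

/-- The generalized Laguerre polynomial `L_n^α(t) = ∑_{k=0}^n (-1)^k binom(n+α, n-k) t^k / k!`,
where `binom(n+α, n-k) = ∏_{i=1}^{n-k} (α+k+i)/i`. It is the polynomial solution of
`t y'' + (α+1-t) y' + n y = 0`. -/
noncomputable def genLaguerre (n : ℕ) (α : ℝ) (t : ℝ) : ℝ :=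
  ∑ k ∈ range (n + 1),
    ((-1 : ℝ) ^ k / (Nat.factorial k)) *
      (∏ i ∈ range (n - k), (α + k + 1 + i) / (i + 1)) * t ^ k

/-- The Laguerre function `ℓ_n^α(t) = e^{-t} L_n^α(2t)`. -/
noncomputable def laguerreFun (n : ℕ) (α : ℝ) (t : ℝ) : ℝ :=
  Real.exp (-t) * genLaguerre n α (2 * t)

/-- coefficient -/
noncomputable def lagC (n : ℕ) (α : ℝ) (k : ℕ) : ℝ :=
  ((-1 : ℝ) ^ k / (Nat.factorial k)) * (∏ i ∈ range (n - k), (α + k + 1 + i) / (i + 1))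

noncomputable def lagD (n : ℕ) (α : ℝ) (t : ℝ) : ℝ :=
  ∑ k ∈ range (n + 1), lagC n α k * ((k : ℝ) * t ^ (k - 1))

noncomputable def lagDD (n : ℕ) (α : ℝ) (t : ℝ) : ℝ :=
  ∑ k ∈ range (n + 1), lagC n α k * ((k : ℝ) * (((k:ℝ) - 1) * t ^ (k - 1 - 1)))

lemma genLaguerre_eq (n : ℕ) (α t : ℝ) :
    genLaguerre n α t = ∑ k ∈ range (n + 1), lagC n α k * t ^ k := rfl

lemma L_hasDerivAt (n : ℕ) (α t : ℝ) :
    HasDerivAt (genLaguerre n α) (lagD n α t) t := by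
  have h : ∀ k ∈ range (n + 1),
      HasDerivAt (fun s : ℝ => lagC n α k * s ^ k) (lagC n α k * ((k : ℝ) * t ^ (k - 1))) t :=
    fun k _ => (hasDerivAt_pow k t).const_mul _
  have := HasDerivAt.fun_sum h
  exact this

lemma D_hasDerivAt (n : ℕ) (α t : ℝ) :
    HasDerivAt (lagD n α) (lagDD n α t) t := by
  have h : ∀ k ∈ range (n + 1),
      HasDerivAt (fun s : ℝ => lagC n α k * ((k : ℝ) * s ^ (k - 1)))
        (lagC n α k * ((k : ℝ) * (((k:ℝ) - 1) * t ^ (k - 1 - 1)))) t := by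
    intro k _
    rcases k with _ | m
    · simpa using (hasDerivAt_const t (0:ℝ))
    · have := (hasDerivAt_pow m t).const_mul (lagC n α (m+1) * ((m:ℝ)+1))
      have h2 : HasDerivAt (fun s : ℝ => lagC n α (m+1) * (((m:ℝ)+1) * s ^ m))
          (lagC n α (m+1) * (((m:ℝ)+1) * ((m:ℝ) * t ^ (m - 1)))) t := by
        simpa [mul_assoc] using this
      simpa [Nat.succ_sub_one, Nat.cast_succ, add_sub_cancel_right] using h2
  have := HasDerivAt.fun_sum h
  exact this

lemma prod_shift (x : ℝ) (r : ℕ) :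
    x * ∏ i ∈ range r, (x + 1 + i) = (x + r) * ∏ i ∈ range r, (x + i) := by
  have h1 := Finset.prod_range_succ (fun i : ℕ => x + i) r
  have h2 := Finset.prod_range_succ' (fun i : ℕ => x + i) r
  have h3 : (∏ i ∈ range r, (x + 1 + (i:ℝ))) = ∏ i ∈ range r, (x + ((i:ℕ)+1:ℕ)) := by
    apply Finset.prod_congr rfl
    intro i _
    push_cast
    ring
  rw [h3]
  rw [h2] at h1
  calc x * ∏ i ∈ range r, (x + ((i:ℕ)+1:ℕ)) = (∏ x_1 ∈ range r, (x + ↑(x_1 + 1))) * (x + ↑(0:ℕ)) := by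
        push_cast; ring
    _ = (∏ x_1 ∈ range r, (x + ↑x_1)) * (x + ↑r) := h1
    _ = (x + r) * ∏ i ∈ range r, (x + i) := by ring

lemma coeff_key (m : ℕ) (α : ℝ) (j : ℕ) (hj : j ≤ m) :
    lagC (m+1) α (j+1) * (((j:ℝ)+1) * ((j:ℝ) + α + 1)) = -((m:ℝ) + 1 + α) * lagC m α j := by
  unfold lagC
  have hsub : m + 1 - (j + 1) = m - j := by omega
  rw [hsub]
  have hprod : ∀ (β : ℝ) (r : ℕ), (∏ i ∈ range r, (β + i) / ((i:ℝ) + 1))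
      = (∏ i ∈ range r, (β + i)) / (∏ i ∈ range r, ((i:ℝ) + 1)) := by
    intro β r; rw [Finset.prod_div_distrib]
  have key := prod_shift (α + j + 1) (m - j)
  have hmj : ((m - j : ℕ) : ℝ) = (m : ℝ) - j := by
    have := Nat.cast_sub hj (R := ℝ); exact this
  have hden : (∏ i ∈ range (m - j), ((i:ℝ) + 1)) ≠ 0 := by
    apply Finset.prod_ne_zero_iff.mpr
    intro i _; positivity
  have hfac : ((j+1).factorial : ℝ) = ((j:ℝ)+1) * (j.factorial : ℝ) := by
    rw [Nat.factorial_succ]; push_cast; ring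
  have hfj : ((j.factorial : ℝ)) ≠ 0 := by positivity
  have hP1 : (∏ i ∈ range (m - j), (α + ((j:ℝ)+1) + 1 + i)) = ∏ i ∈ range (m - j), ((α + j + 1) + 1 + i) := by
    apply Finset.prod_congr rfl; intro i _; push_cast; ring
  rw [hprod, hprod]
  push_cast
  rw [hP1, hfac]
  rw [hmj] at key
  field_simp
  linear_combination ((-1:ℝ)^(j+1)) * key


lemma sum_key (n : ℕ) (hn : 1 ≤ n) (α s : ℝ) :
    s * lagDD n α s + (α + 1) * lagD n α s = -((n:ℝ) + α) * genLaguerre (n - 1) α s := by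
  rcases n with _ | m
  · omega
  simp only [Nat.succ_sub_one]
  rw [lagDD, lagD, Finset.mul_sum, Finset.mul_sum, ← Finset.sum_add_distrib]
  have step1 : ∑ k ∈ range (m + 1 + 1),
      (s * (lagC (m+1) α k * ((k : ℝ) * (((k:ℝ) - 1) * s ^ (k - 1 - 1)))) +
        (α + 1) * (lagC (m+1) α k * ((k : ℝ) * s ^ (k - 1))))
      = ∑ k ∈ range (m + 1 + 1), lagC (m+1) α k * ((k : ℝ) * ((((k:ℝ) - 1) + (α + 1)) * s ^ (k - 1))) := by
    apply Finset.sum_congr rfl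
    intro k _
    rcases k with _ | _ | k0
    · simp
    · push_cast; simp; ring
    · push_cast
      ring
  rw [step1, Finset.sum_range_succ']
  have h0 : lagC (m+1) α 0 * ((0 : ℝ) * (((0:ℝ) - 1 + (α + 1)) * s ^ (0 - 1))) = 0 := by
    norm_num
  rw [genLaguerre_eq, Finset.mul_sum]
  have step2 : ∀ j ∈ range (m + 1),
      lagC (m+1) α (j+1) * ((((j+1 : ℕ)) : ℝ) * ((((j+1 : ℕ) : ℝ) - 1 + (α + 1)) * s ^ (j + 1 - 1)))
      = -((m:ℝ) + 1 + α) * (lagC m α j * s ^ j) := by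
    intro j hj
    have hjm : j ≤ m := by simpa using Nat.lt_succ_iff.mp (Finset.mem_range.mp hj)
    have hc := coeff_key m α j hjm
    push_cast
    linear_combination s ^ j * hc
  rw [Finset.sum_congr rfl step2]
  push_cast
  simp

lemma lf_hasDerivAt (n : ℕ) (α t : ℝ) :
    HasDerivAt (laguerreFun n α)
      (Real.exp (-t) * (2 * lagD n α (2*t) - genLaguerre n α (2*t))) t := by
  have he : HasDerivAt (fun t : ℝ => Real.exp (-t)) (-Real.exp (-t)) t := by
    simpa using ((hasDerivAt_id t).neg).exp
  have hc : HasDerivAt (fun t : ℝ => (2:ℝ) * t) 2 t := by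
    simpa using (hasDerivAt_id t).const_mul (2:ℝ)
  have hL : HasDerivAt (fun t : ℝ => genLaguerre n α (2*t)) (lagD n α (2*t) * 2) t :=
    (L_hasDerivAt n α (2*t)).comp t hc
  have h := he.mul hL
  have e : -Real.exp (-t) * genLaguerre n α (2*t) + Real.exp (-t) * (lagD n α (2*t) * 2)
      = Real.exp (-t) * (2 * lagD n α (2*t) - genLaguerre n α (2*t)) := by ring
  rw [e] at h
  exact h

lemma lf_deriv (n : ℕ) (α : ℝ) :
    deriv (laguerreFun n α)
      = fun t => Real.exp (-t) * (2 * lagD n α (2*t) - genLaguerre n α (2*t)) :=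
  funext fun t => (lf_hasDerivAt n α t).deriv

lemma lf_deriv2 (n : ℕ) (α t : ℝ) :
    HasDerivAt (fun t => Real.exp (-t) * (2 * lagD n α (2*t) - genLaguerre n α (2*t)))
      (Real.exp (-t) * (4 * lagDD n α (2*t) - 4 * lagD n α (2*t) + genLaguerre n α (2*t))) t := by
  have he : HasDerivAt (fun t : ℝ => Real.exp (-t)) (-Real.exp (-t)) t := by
    simpa using ((hasDerivAt_id t).neg).exp
  have hc : HasDerivAt (fun t : ℝ => (2:ℝ) * t) 2 t := by
    simpa using (hasDerivAt_id t).const_mul (2:ℝ)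
  have hL : HasDerivAt (fun t : ℝ => genLaguerre n α (2*t)) (lagD n α (2*t) * 2) t :=
    (L_hasDerivAt n α (2*t)).comp t hc
  have hD : HasDerivAt (fun t : ℝ => lagD n α (2*t)) (lagDD n α (2*t) * 2) t :=
    (D_hasDerivAt n α (2*t)).comp t hc
  have hin : HasDerivAt (fun t : ℝ => 2 * lagD n α (2*t) - genLaguerre n α (2*t))
      (2 * (lagDD n α (2*t) * 2) - lagD n α (2*t) * 2) t := (hD.const_mul 2).sub hL
  have h := he.mul hin
  have e : -Real.exp (-t) * (2 * lagD n α (2*t) - genLaguerre n α (2*t)) +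
        Real.exp (-t) * (2 * (lagDD n α (2*t) * 2) - lagD n α (2*t) * 2)
      = Real.exp (-t) * (4 * lagDD n α (2*t) - 4 * lagD n α (2*t) + genLaguerre n α (2*t)) := by
    ring
  rw [e] at h
  exact h

theorem laguerreFun_lowering (n : ℕ) (hn : 1 ≤ n) (α ν : ℝ) (hν : ν = α + 1) (t : ℝ) :
    t * deriv (deriv (laguerreFun n α)) t + (2 * t + ν) * deriv (laguerreFun n α) t +
      (t + ν) * laguerreFun n α t = -2 * (n + ν - 1) * laguerreFun (n - 1) α t := by
  subst hν
  rw [lf_deriv, (lf_deriv2 n α t).deriv]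
  simp only [laguerreFun]
  have hk := sum_key n hn α (2 * t)
  linear_combination (2 * Real.exp (-t)) * hk
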